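/- Let G' = (V', E') be a finite simple undirected graph with an edge-labeling ℓ : E' → L, let S* ⊆ S_I ⊆ V' with S* nonempty (hence S_I nonempty), and let u ∈ S* satisfy q_{S_I}(u) ≤ q_{S_I}(v) for all v ∈ S_I. Then f(S_I) ≥ (|S*|/|S_I|) · f(S*) + (1 − |S*|/|S_I|) · q_{S_I}(u). -/

import Mathlib

/-- `labeledDeg G ℓ S v l` is the number of edges of the subgraph of `G` induced by `S`
that are incident to the vertex `v` and carry the label `l` under the edge-labeling `ℓ`. -/
def labeledDeg {V L : Type*} [DecidableEq V] [DecidableEq L]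
    (G : SimpleGraph V) [DecidableRel G.Adj] (ℓ : Sym2 V → L)
    (S : Finset V) (v : V) (l : L) : ℕ :=
  (S.filter fun w => v ∈ S ∧ G.Adj v w ∧ ℓ s(v, w) = l).card

/-- `labelSet G ℓ v` is the set `L(v)` of labels of the edges of `G` incident to `v`. -/
def labelSet {V L : Type*} [Fintype V] [DecidableEq V] [DecidableEq L]
    (G : SimpleGraph V) [DecidableRel G.Adj] (ℓ : Sym2 V → L) (v : V) : Finset L :=
  (Finset.univ.filter fun w => G.Adj v w).image fun w => ℓ s(v, w)

/-- `minLabeledDeg G ℓ S v = q_S(v) = min_{l ∈ L(v)} deg_S(v, l)`, with the convention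
that it is `0` when `L(v)` is empty. -/
def minLabeledDeg {V L : Type*} [Fintype V] [DecidableEq V] [DecidableEq L]
    (G : SimpleGraph V) [DecidableRel G.Adj] (ℓ : Sym2 V → L)
    (S : Finset V) (v : V) : ℕ :=
  if h : (labelSet G ℓ v).Nonempty then (labelSet G ℓ v).inf' h (labeledDeg G ℓ S v)
  else 0

/-- `dSum G ℓ S = d(S) = Σ_{v ∈ S} q_S(v)`. -/
def dSum {V L : Type*} [Fintype V] [DecidableEq V] [DecidableEq L]
    (G : SimpleGraph V) [DecidableRel G.Adj] (ℓ : Sym2 V → L) (S : Finset V) : ℕ :=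
  ∑ v ∈ S, minLabeledDeg G ℓ S v

/-- The triangle-graph density `f(S) = d(S) / |S|`. -/
def tgDensity {V L : Type*} [Fintype V] [DecidableEq V] [DecidableEq L]
    (G : SimpleGraph V) [DecidableRel G.Adj] (ℓ : Sym2 V → L) (S : Finset V) : ℚ :=
  (dSum G ℓ S : ℚ) / (S.card : ℚ)


lemma minLabeledDeg_mono {V L : Type*} [Fintype V] [DecidableEq V] [DecidableEq L]
    (G : SimpleGraph V) [DecidableRel G.Adj] (ℓ : Sym2 V → L)
    {S T : Finset V} (hST : S ⊆ T) {v : V} (hv : v ∈ S) :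
    minLabeledDeg G ℓ S v ≤ minLabeledDeg G ℓ T v := by
  unfold minLabeledDeg
  split
  · next h =>
    apply Finset.le_inf'
    intro b hb
    refine le_trans (Finset.inf'_le _ hb) ?_
    unfold labeledDeg
    apply Finset.card_le_card
    intro w hw
    simp only [Finset.mem_filter] at hw ⊢
    exact ⟨hST hw.1, hST hw.2.1, hw.2.2⟩
  · exact le_refl _

/-- If `S* ⊆ S_I` with `S*` nonempty (hence `S_I` nonempty) and `u ∈ S*` has minimum
`q_{S_I}`-value among the vertices of `S_I`, then
`f(S_I) ≥ (|S*|/|S_I|) · f(S*) + (1 − |S*|/|S_I|) · q_{S_I}(u)`. -/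
theorem tgDensity_ge_of_min {V L : Type*} [Fintype V] [DecidableEq V] [DecidableEq L]
    (G : SimpleGraph V) [DecidableRel G.Adj] (ℓ : Sym2 V → L)
    (Sstar SI : Finset V) (hsub : Sstar ⊆ SI) (hne : Sstar.Nonempty)
    (u : V) (hu : u ∈ Sstar)
    (hmin : ∀ v ∈ SI, minLabeledDeg G ℓ SI u ≤ minLabeledDeg G ℓ SI v) :
    tgDensity G ℓ SI ≥
      ((Sstar.card : ℚ) / (SI.card : ℚ)) * tgDensity G ℓ Sstar +
        (1 - (Sstar.card : ℚ) / (SI.card : ℚ)) * (minLabeledDeg G ℓ SI u : ℚ) := by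
  have hs : 0 < Sstar.card := Finset.card_pos.mpr hne
  have hn : 0 < SI.card := Finset.card_pos.mpr (hne.mono hsub)
  have hcard : Sstar.card ≤ SI.card := Finset.card_le_card hsub
  set q := minLabeledDeg G ℓ SI u with hq
  have key : dSum G ℓ Sstar + (SI.card - Sstar.card) * q ≤ dSum G ℓ SI := by
    have hsplit : dSum G ℓ SI =
        ∑ v ∈ Sstar, minLabeledDeg G ℓ SI v +
          ∑ v ∈ SI \ Sstar, minLabeledDeg G ℓ SI v := by
      rw [dSum, ← Finset.sum_sdiff hsub, add_comm]
    rw [hsplit]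
    apply add_le_add
    · exact Finset.sum_le_sum fun v hv => minLabeledDeg_mono G ℓ hsub hv
    · calc (SI.card - Sstar.card) * q = ∑ _v ∈ SI \ Sstar, q := by
            rw [Finset.sum_const, Finset.card_sdiff_of_subset hsub, smul_eq_mul]
        _ ≤ _ := Finset.sum_le_sum fun v hv =>
            hmin v (Finset.mem_sdiff.mp hv).1
  have keyQ : (dSum G ℓ Sstar : ℚ) + ((SI.card : ℚ) - Sstar.card) * q ≤ dSum G ℓ SI := by
    have := (Nat.cast_le (α := ℚ)).mpr key
    push_cast [Nat.cast_sub hcard] at this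
    linarith
  rw [ge_iff_le, tgDensity, tgDensity]
  have e1 : ((Sstar.card : ℚ) / SI.card) * ((dSum G ℓ Sstar : ℚ) / Sstar.card)
      = (dSum G ℓ Sstar : ℚ) / SI.card := by
    field_simp
  have e2 : (1 : ℚ) - (Sstar.card : ℚ) / SI.card = ((SI.card : ℚ) - Sstar.card) / SI.card := by
    field_simp
  rw [e1, e2, div_mul_eq_mul_div, ← add_div]
  gcongr
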